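/- Let P, Q ∈ k[X] be nonconstant polynomials of degrees n, m over an algebraically closed field k of characteristic zero, and suppose f, g are nonconstant elements of a function field K over k with P(f) = Q(g). Then −Σ_{p : v_p(f) < 0} min{v_p(P'(f)), v_p(Q'(g))} = (n−1)·h(f), assuming n ≥ m. -/

import Mathlib

open scoped BigOperators

/-- Abstract data of the function field `K` of a smooth projective curve `C`
over an algebraically closed field `k`: the set of closed points, normalized
valuations `v p`, the genus, and the order `dv p f = v_p (d f / d t_p)` of the
local derivative with respect to a uniformizer at `p`. -/
structure CurveFunctionField (k : Type) [Field k] where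
  K : Type
  [fieldK : Field K]
  [algK : Algebra k K]
  Point : Type
  v : Point → K → ℤ
  genus : ℕ
  dv : Point → K → ℤ
  v_zero : ∀ p, v p 0 = 0
  v_mul : ∀ p (f g : K), f ≠ 0 → g ≠ 0 → v p (f * g) = v p f + v p g
  v_add : ∀ p (f g : K), f ≠ 0 → g ≠ 0 → f + g ≠ 0 →
    min (v p f) (v p g) ≤ v p (f + g)
  v_const : ∀ p (c : k), c ≠ 0 → v p (algebraMap k K c) = 0
  v_finite : ∀ f : K, f ≠ 0 → (Function.support fun p => v p f).Finite
  v_normalized : ∀ p : Point, ∃ f : K, f ≠ 0 ∧ v p f = 1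
  dv_pole : ∀ p (f : K), v p f < 0 → dv p f = v p f - 1
  dv_reg : ∀ p (f : K), 0 ≤ v p f → 0 ≤ dv p f

namespace CurveFunctionField

variable {k : Type} [Field k] (F : CurveFunctionField k)

instance : Field F.K := F.fieldK
instance : Algebra k F.K := F.algK

/-- `f ∈ K` is nonconstant if it is not in the image of `k`. -/
def Nonconstant (f : F.K) : Prop := f ∉ Set.range (algebraMap k F.K)

/-- The height `h(f) = Σ_p −min{0, v_p(f)}` of `f ∈ K`. -/
noncomputable def ht (f : F.K) : ℤ := ∑ᶠ p : F.Point, -(min 0 (F.v p f))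

/-- The height `h(f, g) = Σ_p −min{v_p(f), v_p(g)}` of `[f : g] ∈ ℙ¹(K)`. -/
noncomputable def ht2 (f g : F.K) : ℤ :=
  ∑ᶠ p : F.Point, -(min (F.v p f) (F.v p g))

end CurveFunctionField

open Polynomial CurveFunctionField

namespace CurveFunctionField

variable {k : Type} [Field k] (F : CurveFunctionField k)

lemma Nonconstant.ne_zero {f : F.K} (hf : F.Nonconstant f) : f ≠ 0 := by
  rintro rfl
  exact hf ⟨0, by simp⟩

lemma v_one' (p : F.Point) : F.v p 1 = 0 := by
  have h := F.v_mul p 1 1 one_ne_zero one_ne_zero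
  rw [one_mul] at h
  omega

lemma v_neg' (p : F.Point) {f : F.K} (hf : f ≠ 0) : F.v p (-f) = F.v p f := by
  have h : (-f : F.K) = algebraMap k F.K (-1) * f := by simp
  rw [h, F.v_mul p _ f (by simp) hf, F.v_const p (-1) (by norm_num), zero_add]

lemma add_ne_zero_of_v_lt (p : F.Point) {f g : F.K} (hf : f ≠ 0) (hg : g ≠ 0)
    (h : F.v p f < F.v p g) : f + g ≠ 0 := by
  intro h0
  have : f = -g := by linear_combination h0
  rw [this, F.v_neg' p hg] at h
  omega

lemma v_add_eq_left (p : F.Point) {f g : F.K} (hf : f ≠ 0) (hg : g ≠ 0)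
    (h : F.v p f < F.v p g) : F.v p (f + g) = F.v p f := by
  have hfg : f + g ≠ 0 := F.add_ne_zero_of_v_lt p hf hg h
  have h1 : F.v p f ≤ F.v p (f + g) := by
    have := F.v_add p f g hf hg hfg
    omega
  have h2 : F.v p f ≥ min (F.v p (f + g)) (F.v p (-g)) := by
    have hsum : f + g + -g ≠ 0 := by simpa using hf
    have := F.v_add p (f + g) (-g) hfg (neg_ne_zero.mpr hg) hsum
    simpa using this
  rw [F.v_neg' p hg] at h2
  omega

lemma v_pow' (p : F.Point) {f : F.K} (hf : f ≠ 0) (i : ℕ) :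
    F.v p (f ^ i) = i * F.v p f := by
  induction i with
  | zero => simpa using F.v_one' p
  | succ n ih =>
      rw [pow_succ, F.v_mul p _ f (pow_ne_zero n hf) hf, ih]
      push_cast; ring

lemma aeval_ne_zero' [IsAlgClosed k] {f : F.K} (hf : F.Nonconstant f)
    {R : k[X]} (hR : R ≠ 0) : aeval f R ≠ 0 := by
  intro h0
  have hs : R = C R.leadingCoeff * (R.roots.map fun a => X - C a).prod :=
    (IsAlgClosed.splits R).eq_prod_roots
  rw [hs] at h0
  simp only [map_mul, map_multiset_prod, Multiset.map_map, Function.comp] at h0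
  rcases mul_eq_zero.mp h0 with h | h
  · exact hR (leadingCoeff_eq_zero.mp (by
      have h2 : algebraMap k F.K R.leadingCoeff = 0 := by simpa using h
      exact (_root_.map_eq_zero _).mp h2))
  · have h0m := Multiset.prod_eq_zero_iff.mp h
    obtain ⟨a, _, ha⟩ := Multiset.mem_map.mp h0m
    have hfa : f = algebraMap k F.K a := by
      have h3 := ha
      simp only [map_sub, aeval_X, aeval_C, sub_eq_zero] at h3
      exact h3
    exact hf ⟨a, hfa.symm⟩

end CurveFunctionField

namespace CurveFunctionField

variable {k : Type} [Field k] (F : CurveFunctionField k)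

/-- Lower bound for the valuation of `R(f)` at a pole of `f`. -/
lemma aeval_v_le [IsAlgClosed k] (p : F.Point) {f : F.K} (hf : F.Nonconstant f)
    (hv : F.v p f < 0) :
    ∀ (n : ℕ) (R : k[X]), R.natDegree ≤ n → aeval f R ≠ 0 →
      (R.natDegree : ℤ) * F.v p f ≤ F.v p (aeval f R) := by
  intro n
  induction n with
  | zero =>
      intro R hd h0
      have hR : R = C (R.coeff 0) := eq_C_of_natDegree_eq_zero (Nat.le_zero.mp hd)
      have hc : R.coeff 0 ≠ 0 := by
        intro h; rw [h, map_zero] at hR; rw [hR] at h0; simp at h0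
      rw [hR]
      simp only [aeval_C, natDegree_C, Nat.cast_zero, zero_mul]
      rw [F.v_const p _ hc]
  | succ n ih =>
      intro R hd h0
      by_cases hdX : R.divX = 0
      · have hR : R = C (R.coeff 0) := divX_eq_zero_iff.mp hdX
        have hc : R.coeff 0 ≠ 0 := by
          intro h; rw [h, map_zero] at hR; rw [hR] at h0; simp at h0
        rw [hR]
        simp only [aeval_C, natDegree_C, Nat.cast_zero, zero_mul]
        rw [F.v_const p _ hc]
      · have hf0 : f ≠ 0 := hf.ne_zero
        have haX : aeval f R.divX ≠ 0 := F.aeval_ne_zero' hf hdX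
        have hdle : R.divX.natDegree ≤ n := by
          have := natDegree_divX_eq_natDegree_tsub_one (p := R)
          omega
        have hih := ih R.divX hdle haX
        have hX : F.v p (aeval f R.divX * f) = F.v p (aeval f R.divX) + F.v p f :=
          F.v_mul p _ _ haX hf0
        have hRd : R.natDegree ≠ 0 := by
          intro h
          exact hdX (by simpa [divX_eq_zero_iff] using (eq_C_of_natDegree_eq_zero h))
        have hprodle : (R.natDegree : ℤ) * F.v p f ≤ F.v p (aeval f R.divX * f) := by
          rw [hX]
          have hdeg : (R.natDegree : ℤ) = (R.divX.natDegree : ℤ) + 1 := by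
            have := natDegree_divX_eq_natDegree_tsub_one (p := R)
            omega
          rw [hdeg, add_mul, one_mul]
          omega
        have hRsplit : aeval f R.divX * f + algebraMap k F.K (R.coeff 0) = aeval f R := by
          have h := congrArg (aeval f) (divX_mul_X_add R)
          simp only [map_add, map_mul, aeval_X, aeval_C] at h
          exact h
        by_cases hc0 : R.coeff 0 = 0
        · rw [← hRsplit, hc0, map_zero, add_zero]
          exact hprodle
        · have hprodne : aeval f R.divX * f ≠ 0 := mul_ne_zero haX hf0
          have hcne : algebraMap k F.K (R.coeff 0) ≠ 0 := by
            simpa using hc0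
          have hsumne : aeval f R.divX * f + algebraMap k F.K (R.coeff 0) ≠ 0 := by
            rw [hRsplit]; exact h0
          have := F.v_add p _ _ hprodne hcne hsumne
          rw [hRsplit, F.v_const p _ hc0] at this
          have hle0 : (R.natDegree : ℤ) * F.v p f ≤ 0 := by
            have : (0:ℤ) ≤ (R.natDegree : ℤ) := Nat.cast_nonneg _
            nlinarith
          omega

/-- Regularity: `R(g)` has nonnegative valuation where `g` does. -/
lemma aeval_v_nonneg [IsAlgClosed k] (p : F.Point) {g : F.K} (hg : F.Nonconstant g)
    (hv : 0 ≤ F.v p g) :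
    ∀ (n : ℕ) (R : k[X]), R.natDegree ≤ n → aeval g R ≠ 0 →
      0 ≤ F.v p (aeval g R) := by
  intro n
  induction n with
  | zero =>
      intro R hd h0
      have hR : R = C (R.coeff 0) := eq_C_of_natDegree_eq_zero (Nat.le_zero.mp hd)
      have hc : R.coeff 0 ≠ 0 := by
        intro h; rw [h, map_zero] at hR; rw [hR] at h0; simp at h0
      rw [hR, aeval_C, F.v_const p _ hc]
  | succ n ih =>
      intro R hd h0
      by_cases hdX : R.divX = 0
      · have hR : R = C (R.coeff 0) := divX_eq_zero_iff.mp hdX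
        have hc : R.coeff 0 ≠ 0 := by
          intro h; rw [h, map_zero] at hR; rw [hR] at h0; simp at h0
        rw [hR, aeval_C, F.v_const p _ hc]
      · have hg0 : g ≠ 0 := hg.ne_zero
        have haX : aeval g R.divX ≠ 0 := F.aeval_ne_zero' hg hdX
        have hdle : R.divX.natDegree ≤ n := by
          have := natDegree_divX_eq_natDegree_tsub_one (p := R)
          have hRd : R.natDegree ≠ 0 := by
            intro h
            exact hdX (by simpa [divX_eq_zero_iff] using (eq_C_of_natDegree_eq_zero h))
          omega
        have hih := ih R.divX hdle haX
        have hX : F.v p (aeval g R.divX * g) = F.v p (aeval g R.divX) + F.v p g :=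
          F.v_mul p _ _ haX hg0
        have hprodle : 0 ≤ F.v p (aeval g R.divX * g) := by omega
        have hRsplit : aeval g R.divX * g + algebraMap k F.K (R.coeff 0) = aeval g R := by
          have h := congrArg (aeval g) (divX_mul_X_add R)
          simp only [map_add, map_mul, aeval_X, aeval_C] at h
          exact h
        by_cases hc0 : R.coeff 0 = 0
        · rw [← hRsplit, hc0, map_zero, add_zero]
          exact hprodle
        · have hprodne : aeval g R.divX * g ≠ 0 := mul_ne_zero haX hg0
          have hcne : algebraMap k F.K (R.coeff 0) ≠ 0 := by simpa using hc0
          have hsumne : aeval g R.divX * g + algebraMap k F.K (R.coeff 0) ≠ 0 := by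
            rw [hRsplit]; exact h0
          have := F.v_add p _ _ hprodne hcne hsumne
          rw [hRsplit, F.v_const p _ hc0] at this
          omega

/-- Exact valuation of `R(f)` at a pole of `f`. -/
lemma aeval_v_eq [IsAlgClosed k] (p : F.Point) {f : F.K} (hf : F.Nonconstant f)
    (hv : F.v p f < 0) (R : k[X]) (hR : R ≠ 0) :
    F.v p (aeval f R) = (R.natDegree : ℤ) * F.v p f := by
  have hf0 : f ≠ 0 := hf.ne_zero
  have hlc : R.leadingCoeff ≠ 0 := leadingCoeff_ne_zero.mpr hR
  have hsplit : aeval f R.eraseLead + algebraMap k F.K R.leadingCoeff * f ^ R.natDegree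
      = aeval f R := by
    have h := congrArg (aeval f) (eraseLead_add_C_mul_X_pow R)
    simp only [map_add, map_mul, map_pow, aeval_C, aeval_X] at h
    exact h
  have hlead : F.v p (algebraMap k F.K R.leadingCoeff * f ^ R.natDegree)
      = (R.natDegree : ℤ) * F.v p f := by
    rw [F.v_mul p _ _ (by simpa using hlc) (pow_ne_zero _ hf0), F.v_const p _ hlc,
      F.v_pow' p hf0, zero_add]
  by_cases hel : R.eraseLead = 0
  · rw [← hsplit, hel, map_zero, zero_add, hlead]
  · have hlt : R.eraseLead.natDegree < R.natDegree := by
      rcases R.eraseLead_natDegree_lt_or_eraseLead_eq_zero with h | h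
      · exact h
      · exact absurd h hel
    have hane : aeval f R.eraseLead ≠ 0 := F.aeval_ne_zero' hf hel
    have hge : (R.eraseLead.natDegree : ℤ) * F.v p f ≤ F.v p (aeval f R.eraseLead) :=
      F.aeval_v_le p hf hv R.eraseLead.natDegree R.eraseLead le_rfl hane
    have hstrict : F.v p (algebraMap k F.K R.leadingCoeff * f ^ R.natDegree)
        < F.v p (aeval f R.eraseLead) := by
      rw [hlead]
      have : ((R.eraseLead.natDegree : ℤ)) < (R.natDegree : ℤ) := by exact_mod_cast hlt
      nlinarith
    have hne : algebraMap k F.K R.leadingCoeff * f ^ R.natDegree ≠ 0 :=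
      mul_ne_zero (by simpa using hlc) (pow_ne_zero _ hf0)
    have := F.v_add_eq_left p hne hane hstrict
    rw [add_comm] at hsplit
    rw [← hsplit, this, hlead]

end CurveFunctionField

lemma natDegree_deriv {k : Type} [Field k] [CharZero k] {R : k[X]} (hR : 0 < R.natDegree) :
    R.derivative.natDegree = R.natDegree - 1 := by
  refine le_antisymm (natDegree_derivative_le R) (le_natDegree_of_ne_zero ?_)
  rw [coeff_derivative]
  have h1 : R.natDegree - 1 + 1 = R.natDegree := by omega
  rw [h1]
  apply mul_ne_zero
  · exact leadingCoeff_ne_zero.mpr (fun h => by simp [h] at hR)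
  · have h2 : ((R.natDegree - 1 + 1 : ℕ) : k) ≠ 0 := Nat.cast_ne_zero.mpr (by omega)
    rw [Nat.cast_add, Nat.cast_one] at h2
    exact h2



/-- `−Σ_{v_p(f)<0} min{v_p(P'(f)), v_p(Q'(g))} = (n−1)·h(f)` when `P(f)=Q(g)`
and `n = deg P ≥ deg Q = m`. -/
theorem sum_min_deriv_at_poles {k : Type} [Field k] [IsAlgClosed k] [CharZero k]
    (F : CurveFunctionField k) (P Q : Polynomial k)
    (hP : 0 < Q.natDegree) (hnm : Q.natDegree ≤ P.natDegree)
    (f g : F.K) (hf : F.Nonconstant f) (hg : F.Nonconstant g)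
    (heq : Polynomial.aeval f P = Polynomial.aeval g Q) :
    -∑ᶠ p ∈ {p : F.Point | F.v p f < 0},
        min (F.v p (Polynomial.aeval f P.derivative))
            (F.v p (Polynomial.aeval g Q.derivative)) =
      ((P.natDegree : ℤ) - 1) * F.ht f := by
  have hf0 : f ≠ 0 := hf.ne_zero
  have hn1 : 0 < P.natDegree := lt_of_lt_of_le hP hnm
  have hPne : P ≠ 0 := fun h => by simp [h] at hn1
  have hQne : Q ≠ 0 := fun h => by simp [h] at hP
  have hP' : P.derivative ≠ 0 := fun h => by
    have := natDegree_eq_zero_of_derivative_eq_zero h; omega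
  have hQ' : Q.derivative ≠ 0 := fun h => by
    have := natDegree_eq_zero_of_derivative_eq_zero h; omega
  have hm1 : (1:ℤ) ≤ (Q.natDegree : ℤ) := by exact_mod_cast hP
  have hmle : (Q.natDegree : ℤ) ≤ (P.natDegree : ℤ) := by exact_mod_cast hnm
  -- pointwise computation of the min at a pole of f
  have key : ∀ p : F.Point, F.v p f < 0 →
      min (F.v p (aeval f P.derivative)) (F.v p (aeval g Q.derivative))
        = ((P.natDegree : ℤ) - 1) * F.v p f := by
    intro p hp
    have hvP : F.v p (aeval f P) = (P.natDegree : ℤ) * F.v p f :=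
      F.aeval_v_eq p hf hp P hPne
    have haQne : aeval g Q ≠ 0 := heq ▸ F.aeval_ne_zero' hf hPne
    have hvg : F.v p g < 0 := by
      by_contra hge
      push_neg at hge
      have h0 := F.aeval_v_nonneg p hg hge Q.natDegree Q le_rfl haQne
      rw [← heq, hvP] at h0
      nlinarith [hp, (by exact_mod_cast hn1 : (0:ℤ) < (P.natDegree : ℤ))]
    have hvQ : F.v p (aeval g Q) = (Q.natDegree : ℤ) * F.v p g :=
      F.aeval_v_eq p hg hvg Q hQne
    have hmn : (Q.natDegree : ℤ) * F.v p g = (P.natDegree : ℤ) * F.v p f := by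
      rw [← hvQ, ← heq, hvP]
    have hvP' : F.v p (aeval f P.derivative) = ((P.natDegree : ℤ) - 1) * F.v p f := by
      rw [F.aeval_v_eq p hf hp P.derivative hP', natDegree_deriv hn1]
      congr 1
      have : ((P.natDegree - 1 : ℕ) : ℤ) = (P.natDegree : ℤ) - 1 := by
        push_cast [Nat.cast_sub (by omega : 1 ≤ P.natDegree)]; ring
      exact this
    have hvQ' : F.v p (aeval g Q.derivative) = ((Q.natDegree : ℤ) - 1) * F.v p g := by
      rw [F.aeval_v_eq p hg hvg Q.derivative hQ', natDegree_deriv hP]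
      congr 1
      have : ((Q.natDegree - 1 : ℕ) : ℤ) = (Q.natDegree : ℤ) - 1 := by
        push_cast [Nat.cast_sub (by omega : 1 ≤ Q.natDegree)]; ring
      exact this
    rw [hvP', hvQ']
    apply min_eq_left
    have h2 : (Q.natDegree : ℤ) * (((P.natDegree : ℤ) - 1) * F.v p f)
        ≤ (Q.natDegree : ℤ) * (((Q.natDegree : ℤ) - 1) * F.v p g) := by
      have h3 : (Q.natDegree : ℤ) * (((Q.natDegree : ℤ) - 1) * F.v p g)
          = ((Q.natDegree : ℤ) - 1) * ((P.natDegree : ℤ) * F.v p f) := by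
        rw [← hmn]; ring
      rw [h3]
      have h4 : ((P.natDegree : ℤ) - (Q.natDegree : ℤ)) * F.v p f ≤ 0 :=
        mul_nonpos_of_nonneg_of_nonpos (by omega) (le_of_lt hp)
      nlinarith [h4]
    exact le_of_mul_le_mul_left h2 (by omega)
  -- finiteness of the set of poles
  have hSfin : {p : F.Point | F.v p f < 0}.Finite :=
    (F.v_finite f hf0).subset fun p hp => by
      simp only [Set.mem_setOf_eq] at hp
      simp only [Function.mem_support]
      omega
  rw [finsum_mem_eq_finite_toFinset_sum _ hSfin]
  have hht : F.ht f = ∑ p ∈ hSfin.toFinset, -(F.v p f) := by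
    rw [ht, finsum_eq_sum_of_support_subset _ (s := hSfin.toFinset) ?_]
    · refine Finset.sum_congr rfl fun p hp => ?_
      have : F.v p f < 0 := by simpa using (hSfin.mem_toFinset.mp hp)
      rw [min_eq_right (le_of_lt this)]
    · intro p hp
      simp only [Function.mem_support] at hp
      have : F.v p f < 0 := by
        by_contra h
        push_neg at h
        rw [min_eq_left h] at hp
        simp at hp
      simpa [hSfin.mem_toFinset] using this
  have hsum : ∑ p ∈ hSfin.toFinset,
      min (F.v p (aeval f P.derivative)) (F.v p (aeval g Q.derivative))
      = ∑ p ∈ hSfin.toFinset, ((P.natDegree : ℤ) - 1) * F.v p f :=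
    Finset.sum_congr rfl fun p hp => key p (by simpa using hSfin.mem_toFinset.mp hp)
  rw [hsum, hht, Finset.mul_sum, ← Finset.sum_neg_distrib]
  exact Finset.sum_congr rfl fun p _ => by ring
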